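/- The number of unranked labeled tree shapes compatible with a labeled binary perfect phylogeny (pi1, pi2) equals the product of the numbers of unranked labeled tree shapes compatible with pi1 and with pi2. -/

import Mathlib

/-- A labeled perfect phylogeny: a rooted binary tree whose leaves carry sets of
sample labels. -/
inductive LPP : Type
  | leaf : Finset ℕ → LPP
  | node : LPP → LPP → LPP

namespace LPP

/-- The set of sample labels of a labeled perfect phylogeny. -/
def samples : LPP → Finset ℕ
  | leaf s => s
  | node l r => l.samples ∪ r.samples

/-- Validity: leaves carry nonempty label sets, and subtrees carry disjoint label sets. -/
def Valid : LPP → Prop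
  | leaf s => s.Nonempty
  | node l r => l.Valid ∧ r.Valid ∧ Disjoint l.samples r.samples

/-- One elementary coarsening step: collapsing a cherry (merging the label sets of two
pendant leaf edges), anywhere in the tree; children are unordered. -/
inductive Step : LPP → LPP → Prop
  | cherry (a b : Finset ℕ) : Step (node (leaf a) (leaf b)) (leaf (a ∪ b))
  | swap (s t : LPP) : Step (node s t) (node t s)
  | left {t t' : LPP} (s : LPP) : Step t t' → Step (node t s) (node t' s)
  | right {t t' : LPP} (s : LPP) : Step t t' → Step (node s t) (node s t')

/-- `π.Refines σ` iff `σ` is obtained from `π` by sequentially collapsing cherries. -/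
def Refines (π σ : LPP) : Prop := Relation.ReflTransGen Step π σ

end LPP

/-- An unranked labeled tree: rooted binary tree with leaves labeled by samples and
unlabeled internal nodes (ordered children; unranked labeled tree shapes are the
quotient by `ULTree.Equiv`). -/
inductive ULTree : Type
  | leaf : ℕ → ULTree
  | node : ULTree → ULTree → ULTree

namespace ULTree

/-- Multiset of leaf labels. -/
def leafLabels : ULTree → Multiset ℕ
  | leaf x => {x}
  | node l r => l.leafLabels + r.leafLabels

/-- The labeled perfect phylogeny obtained by viewing each leaf as a singleton block. -/
def toLPP : ULTree → LPP
  | leaf x => LPP.leaf {x}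
  | node l r => LPP.node l.toLPP r.toLPP

/-- `t.Valid s`: the leaves of `t` are labeled bijectively by the sample set `s`. -/
def Valid (t : ULTree) (s : Finset ℕ) : Prop := t.leafLabels = s.val

/-- Equality of labeled trees up to reordering of children. -/
inductive Equiv : ULTree → ULTree → Prop
  | leaf (x : ℕ) : Equiv (leaf x) (leaf x)
  | node {a b c d : ULTree} : Equiv a c → Equiv b d → Equiv (node a b) (node c d)
  | swap {a b c d : ULTree} : Equiv a d → Equiv b c → Equiv (node a b) (node c d)

end ULTree

/-- `GXcount π` is the number of unranked labeled tree shapes compatible with the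
labeled perfect phylogeny `π`. -/
noncomputable def GXcount (π : LPP) : ℕ :=
  Nat.card {q : Quot ULTree.Equiv //
    ∃ t : ULTree, Quot.mk _ t = q ∧ t.Valid π.samples ∧ LPP.Refines t.toLPP π}

namespace LPP

lemma step_samples {a b : LPP} (h : Step a b) : a.samples = b.samples := by
  induction h with
  | cherry a b => simp [samples]
  | swap s t => simp [samples, Finset.union_comm]
  | left s _ ih => simp [samples, ih]
  | right s _ ih => simp [samples, ih]

lemma refines_samples {a b : LPP} (h : Refines a b) : a.samples = b.samples := by
  induction h with
  | refl => rfl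
  | tail _ hstep ih => exact ih.trans (step_samples hstep)

lemma refines_leaf {s : Finset ℕ} {σ : LPP} (h : Refines (leaf s) σ) : σ = leaf s := by
  rcases h.cases_head with h | ⟨c, hc, _⟩
  · exact h.symm
  · cases hc

lemma refines_left {t t' : LPP} (s : LPP) (h : Refines t t') :
    Refines (node t s) (node t' s) :=
  Relation.ReflTransGen.lift (fun x => node x s) (fun _ _ h => Step.left s h) _ _ h

lemma refines_right {t t' : LPP} (s : LPP) (h : Refines t t') :
    Refines (node s t) (node s t') :=
  Relation.ReflTransGen.lift (fun x => node s x) (fun _ _ h => Step.right s h) _ _ h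

lemma refines_node_intro {a b c d : LPP} (h1 : Refines a c) (h2 : Refines b d) :
    Refines (node a b) (node c d) :=
  (refines_left b h1).trans (refines_right c h2)

lemma refines_node_elim {c d : LPP} :
    ∀ {x : LPP}, Refines x (node c d) → ∀ a b, x = node a b →
      (Refines a c ∧ Refines b d) ∨ (Refines a d ∧ Refines b c) := by
  intro x h
  induction h using Relation.ReflTransGen.head_induction_on with
  | refl =>
    intro a b hx
    cases hx
    exact Or.inl ⟨Relation.ReflTransGen.refl, Relation.ReflTransGen.refl⟩
  | head hstep hrest ih =>
    intro a b hx
    subst hx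
    cases hstep with
    | cherry a' b' => exact absurd (refines_leaf hrest) (by simp)
    | swap s t =>
      rcases ih b a rfl with ⟨h1, h2⟩ | ⟨h1, h2⟩
      · exact Or.inr ⟨h2, h1⟩
      · exact Or.inl ⟨h2, h1⟩
    | left s hst =>
      rcases ih _ _ rfl with ⟨h1, h2⟩ | ⟨h1, h2⟩
      · exact Or.inl ⟨h1.head hst, h2⟩
      · exact Or.inr ⟨h1.head hst, h2⟩
    | right s hst =>
      rcases ih _ _ rfl with ⟨h1, h2⟩ | ⟨h1, h2⟩
      · exact Or.inl ⟨h1, h2.head hst⟩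
      · exact Or.inr ⟨h1, h2.head hst⟩

lemma refines_node_iff {a b c d : LPP} :
    Refines (node a b) (node c d) ↔
      (Refines a c ∧ Refines b d) ∨ (Refines a d ∧ Refines b c) := by
  constructor
  · intro h; exact refines_node_elim h a b rfl
  · rintro (⟨h1, h2⟩ | ⟨h1, h2⟩)
    · exact refines_node_intro h1 h2
    · exact (Relation.ReflTransGen.single (Step.swap a b)).trans (refines_node_intro h2 h1)

lemma valid_samples_nonempty : ∀ {π : LPP}, π.Valid → π.samples.Nonempty
  | leaf s, h => h
  | node l r, h => ((valid_samples_nonempty h.1).mono Finset.subset_union_left :)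

end LPP

namespace ULTree

lemma equiv_refl : ∀ t : ULTree, Equiv t t
  | leaf x => Equiv.leaf x
  | node l r => Equiv.node (equiv_refl l) (equiv_refl r)

lemma equiv_symm : ∀ {a b : ULTree}, Equiv a b → Equiv b a := by
  intro a b h
  induction h with
  | leaf x => exact Equiv.leaf x
  | node _ _ ih1 ih2 => exact Equiv.node ih1 ih2
  | swap _ _ ih1 ih2 => exact Equiv.swap ih2 ih1

lemma equiv_trans : ∀ {a b c : ULTree}, Equiv a b → Equiv b c → Equiv a c := by
  intro a b c h
  induction h generalizing c with
  | leaf x => exact fun h2 => h2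
  | node _ _ ih1 ih2 =>
    intro h2
    cases h2 with
    | node h3 h4 => exact Equiv.node (ih1 h3) (ih2 h4)
    | swap h3 h4 => exact Equiv.swap (ih1 h3) (ih2 h4)
  | swap _ _ ih1 ih2 =>
    intro h2
    cases h2 with
    | node h3 h4 => exact Equiv.swap (ih1 h4) (ih2 h3)
    | swap h3 h4 => exact Equiv.node (ih1 h4) (ih2 h3)

lemma equivalence_equiv : Equivalence Equiv :=
  ⟨equiv_refl, equiv_symm, equiv_trans⟩

lemma mk_eq_mk {a b : ULTree} : Quot.mk Equiv a = Quot.mk Equiv b ↔ Equiv a b := by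
  rw [Quot.eq]
  exact equivalence_equiv.eqvGen_iff

lemma equiv_leafLabels {a b : ULTree} (h : Equiv a b) : a.leafLabels = b.leafLabels := by
  induction h with
  | leaf x => rfl
  | node _ _ ih1 ih2 => simp [leafLabels, ih1, ih2]
  | swap _ _ ih1 ih2 => simp [leafLabels, ih1, ih2, add_comm]

lemma leafLabels_toFinset : ∀ t : ULTree, t.leafLabels.toFinset = t.toLPP.samples
  | leaf x => by simp [leafLabels, toLPP, LPP.samples]
  | node l r => by
    simp [leafLabels, toLPP, LPP.samples, Multiset.toFinset_add,
      leafLabels_toFinset l, leafLabels_toFinset r]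

/-- Quotient-level node operation. -/
def qnode : Quot Equiv → Quot Equiv → Quot Equiv :=
  Quot.lift₂ (fun a b => Quot.mk Equiv (node a b))
    (fun a _ _ h => Quot.sound (Equiv.node (equiv_refl a) h))
    (fun _ _ b h => Quot.sound (Equiv.node h (equiv_refl b)))

@[simp] lemma qnode_mk (a b : ULTree) :
    qnode (Quot.mk Equiv a) (Quot.mk Equiv b) = Quot.mk Equiv (node a b) := rfl

end ULTree

/-- Proposition 7: the number of unranked labeled tree shapes compatible with a labeled
binary perfect phylogeny `(π₁, π₂)` equals the product of the counts for `π₁` and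
`π₂`. -/
theorem unrankedLabeled_compatible_node (π₁ π₂ : LPP)
    (hv : LPP.Valid (LPP.node π₁ π₂)) :
    GXcount (LPP.node π₁ π₂) = GXcount π₁ * GXcount π₂ := by
  obtain ⟨hv₁, hv₂, hdis⟩ := hv
  have hval : (LPP.node π₁ π₂).samples.val = π₁.samples.val + π₂.samples.val := by
    show (π₁.samples ∪ π₂.samples).val = _
    rw [← Finset.disjUnion_eq_union _ _ hdis]
    rfl
  -- splitting validity of a node tree into validity of the two subtrees
  have split : ∀ t₁ t₂ : ULTree,
      (ULTree.node t₁ t₂).Valid (LPP.node π₁ π₂).samples →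
      LPP.Refines t₁.toLPP π₁ → LPP.Refines t₂.toLPP π₂ →
      t₁.Valid π₁.samples ∧ t₂.Valid π₂.samples := by
    intro t₁ t₂ hv12 r₁ r₂
    have h : t₁.leafLabels + t₂.leafLabels = (LPP.node π₁ π₂).samples.val := hv12
    have hnd : (t₁.leafLabels + t₂.leafLabels).Nodup := by
      rw [h]; exact (LPP.node π₁ π₂).samples.nodup
    obtain ⟨n₁, n₂, -⟩ := Multiset.nodup_add.mp hnd
    constructor
    · show t₁.leafLabels = π₁.samples.val
      have ht : t₁.leafLabels.toFinset = π₁.samples := by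
        rw [ULTree.leafLabels_toFinset, LPP.refines_samples r₁]
      calc t₁.leafLabels = t₁.leafLabels.dedup := (Multiset.dedup_eq_self.mpr n₁).symm
        _ = t₁.leafLabels.toFinset.val := (Multiset.toFinset_val _).symm
        _ = π₁.samples.val := by rw [ht]
    · show t₂.leafLabels = π₂.samples.val
      have ht : t₂.leafLabels.toFinset = π₂.samples := by
        rw [ULTree.leafLabels_toFinset, LPP.refines_samples r₂]
      calc t₂.leafLabels = t₂.leafLabels.dedup := (Multiset.dedup_eq_self.mpr n₂).symm
        _ = t₂.leafLabels.toFinset.val := (Multiset.toFinset_val _).symm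
        _ = π₂.samples.val := by rw [ht]
  have hmem : ∀ q₁ q₂ : Quot ULTree.Equiv,
      (∃ t : ULTree, Quot.mk _ t = q₁ ∧ t.Valid π₁.samples ∧ LPP.Refines t.toLPP π₁) →
      (∃ t : ULTree, Quot.mk _ t = q₂ ∧ t.Valid π₂.samples ∧ LPP.Refines t.toLPP π₂) →
      ∃ t : ULTree, Quot.mk _ t = ULTree.qnode q₁ q₂ ∧
        t.Valid (LPP.node π₁ π₂).samples ∧
        LPP.Refines t.toLPP (LPP.node π₁ π₂) := by
    rintro q₁ q₂ ⟨t₁, rfl, v₁, r₁⟩ ⟨t₂, rfl, v₂, r₂⟩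
    refine ⟨ULTree.node t₁ t₂, rfl, ?_, ?_⟩
    · show t₁.leafLabels + t₂.leafLabels = (LPP.node π₁ π₂).samples.val
      have v₁' : t₁.leafLabels = π₁.samples.val := v₁
      have v₂' : t₂.leafLabels = π₂.samples.val := v₂
      rw [hval, v₁', v₂']
    · exact LPP.refines_node_intro r₁ r₂
  simp only [GXcount]
  rw [← Nat.card_prod]
  refine Nat.card_congr (Equiv.ofBijective
    (fun p => ⟨ULTree.qnode p.1.1 p.2.1, hmem _ _ p.1.2 p.2.2⟩) ⟨?_, ?_⟩).symm
  · -- injectivity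
    rintro ⟨⟨q₁, hq₁⟩, ⟨q₂, hq₂⟩⟩ ⟨⟨q₁', hq₁'⟩, ⟨q₂', hq₂'⟩⟩ h
    obtain ⟨t₁, rfl, v₁, r₁⟩ := id hq₁
    obtain ⟨t₂, rfl, v₂, r₂⟩ := id hq₂
    obtain ⟨t₁', rfl, v₁', r₁'⟩ := id hq₁'
    obtain ⟨t₂', rfl, v₂', r₂'⟩ := id hq₂'
    simp only [ULTree.qnode_mk, Subtype.mk.injEq] at h
    rw [ULTree.mk_eq_mk] at h
    cases h with
    | node h1 h2 =>
      simp only [Prod.mk.injEq, Subtype.mk.injEq]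
      exact ⟨ULTree.mk_eq_mk.mpr h1, ULTree.mk_eq_mk.mpr h2⟩
    | swap h1 h2 =>
      exfalso
      have hll := ULTree.equiv_leafLabels h1
      have e₁ : t₁.leafLabels = π₁.samples.val := v₁
      have e₂ : t₂'.leafLabels = π₂.samples.val := v₂'
      rw [e₁, e₂] at hll
      have heq : π₁.samples = π₂.samples := Finset.val_injective hll
      obtain ⟨x, hx⟩ := LPP.valid_samples_nonempty hv₁
      exact Finset.disjoint_left.mp hdis hx (heq ▸ hx)
  · -- surjectivity
    rintro ⟨q, hq⟩
    obtain ⟨t, hmk, hval', href⟩ := id hq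
    cases t with
    | leaf x => exact absurd (LPP.refines_leaf href) (by simp)
    | node t₁ t₂ =>
      rcases LPP.refines_node_elim href t₁.toLPP t₂.toLPP rfl with ⟨r₁, r₂⟩ | ⟨r₁, r₂⟩
      · obtain ⟨e₁, e₂⟩ := split t₁ t₂ hval' r₁ r₂
        refine ⟨(⟨Quot.mk _ t₁, t₁, rfl, e₁, r₁⟩, ⟨Quot.mk _ t₂, t₂, rfl, e₂, r₂⟩), ?_⟩
        apply Subtype.ext
        show ULTree.qnode (Quot.mk _ t₁) (Quot.mk _ t₂) = q
        rw [ULTree.qnode_mk, hmk]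
      · have hval'' : (ULTree.node t₂ t₁).Valid (LPP.node π₁ π₂).samples := by
          show t₂.leafLabels + t₁.leafLabels = (LPP.node π₁ π₂).samples.val
          rw [add_comm]
          exact hval'
        obtain ⟨e₁, e₂⟩ := split t₂ t₁ hval'' r₂ r₁
        refine ⟨(⟨Quot.mk _ t₂, t₂, rfl, e₁, r₂⟩, ⟨Quot.mk _ t₁, t₁, rfl, e₂, r₁⟩), ?_⟩
        apply Subtype.ext
        show ULTree.qnode (Quot.mk _ t₂) (Quot.mk _ t₁) = q
        rw [ULTree.qnode_mk, ← hmk]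
        exact Quot.sound (ULTree.Equiv.swap (ULTree.equiv_refl t₂) (ULTree.equiv_refl t₁))
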